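/- In a rooted tree, a node n is the k-depth ancestor of a leaf m (n = α_m^k) if and only if there exists a subset W of the leaves with m ∈ W such that the intersection over all w ∈ W of the k-th level sets N_w^k equals the singleton {n}. -/

import Mathlib

open scoped Classical

/-- A finite rooted tree encoded by a parent function: every node reaches the
root by iterating `parent`, and the root is its own parent. -/
structure GridTree (V : Type) [Fintype V] [DecidableEq V] where
  root : V
  parent : V → V
  parent_root : parent root = root
  reaches : ∀ v, ∃ k, parent^[k] v = root

namespace GridTree

variable {V : Type} [Fintype V] [DecidableEq V]

/-- Depth of a node: distance (number of edges) to the root. -/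
noncomputable def depth (T : GridTree V) (v : V) : ℕ := Nat.find (T.reaches v)

/-- The depth-`k` ancestor `α_v^k` of `v` (for `k ≤ depth v`). -/
noncomputable def anc (T : GridTree V) (v : V) (k : ℕ) : V :=
  T.parent^[T.depth v - k] v

/-- Ancestor set `A_v`: all nodes on the path from the root to `v`, including `v`. -/
def ancSet (T : GridTree V) (v : V) : Set V := {u | ∃ j, T.parent^[j] v = u}

/-- Descendant set `D_n`: all nodes whose ancestor set contains `n`. -/
def desc (T : GridTree V) (n : V) : Set V := {m | n ∈ T.ancSet m}

/-- The `k`-th level set `N_m^k` of node `m`. -/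
noncomputable def level (T : GridTree V) (m : V) (k : ℕ) : Set V :=
  if k = T.depth m then T.desc m
  else T.desc (T.anc m k) \ T.desc (T.anc m (k + 1))

/-- A leaf: a node with no descendants other than itself. -/
def IsLeaf (T : GridTree V) (m : V) : Prop := T.desc m = {m}

/-- Path-resistance matrix: `R m n` is the sum of the resistances of edges with
both endpoints in `A_m ∩ A_n`.  The edge above a non-root node `c` (joining `c`
to its parent) has resistance `r c`. -/
noncomputable def Rmat (T : GridTree V) (r : V → ℝ) (m n : V) : ℝ :=
  ∑ c : V, if c ∈ T.ancSet m ∧ c ∈ T.ancSet n ∧ c ≠ T.root then r c else 0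

end GridTree


namespace GridTree

variable {V : Type} [Fintype V] [DecidableEq V] (T : GridTree V)

lemma iterate_depth (v : V) : T.parent^[T.depth v] v = T.root := Nat.find_spec (T.reaches v)

lemma depth_le {v : V} {j : ℕ} (h : T.parent^[j] v = T.root) : T.depth v ≤ j := Nat.find_le h

lemma iterate_root (j : ℕ) : T.parent^[j] T.root = T.root := by
  induction j with
  | zero => rfl
  | succ i ih => rw [Function.iterate_succ_apply', ih, T.parent_root]

lemma depth_root : T.depth T.root = 0 := Nat.le_zero.mp (T.depth_le rfl)

lemma depth_eq_zero {v : V} (h : T.depth v = 0) : v = T.root := by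
  have h2 := T.iterate_depth v
  rwa [h] at h2

lemma iterate_of_le {v : V} {j : ℕ} (h : T.depth v ≤ j) : T.parent^[j] v = T.root := by
  obtain ⟨i, rfl⟩ := Nat.exists_eq_add_of_le h
  rw [add_comm, Function.iterate_add_apply, T.iterate_depth, T.iterate_root]

lemma depth_parent (v : V) : T.depth (T.parent v) = T.depth v - 1 := by
  rcases eq_or_ne v T.root with rfl | hv
  · rw [T.parent_root, T.depth_root]
  · have h1 : T.depth v ≠ 0 := fun h => hv (T.depth_eq_zero h)
    apply le_antisymm
    · apply T.depth_le
      have h3 := T.iterate_depth v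
      rw [show T.depth v = T.depth v - 1 + 1 by omega, Function.iterate_succ_apply] at h3
      exact h3
    · have h2 : T.parent^[T.depth (T.parent v) + 1] v = T.root := by
        rw [Function.iterate_succ_apply]; exact T.iterate_depth (T.parent v)
      have := T.depth_le h2
      omega

lemma depth_iterate (j : ℕ) (v : V) : T.depth (T.parent^[j] v) = T.depth v - j := by
  induction j with
  | zero => simp
  | succ i ih => rw [Function.iterate_succ_apply', T.depth_parent, ih]; omega

lemma mem_desc {x n : V} : x ∈ T.desc n ↔ ∃ j, T.parent^[j] x = n := Iff.rfl

lemma mem_desc_iff {x n : V} :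
    x ∈ T.desc n ↔ T.depth n ≤ T.depth x ∧ T.parent^[T.depth x - T.depth n] x = n := by
  constructor
  · rintro ⟨j, rfl⟩
    rcases le_or_gt j (T.depth x) with h | h
    · rw [T.depth_iterate]
      refine ⟨by omega, ?_⟩
      congr 1
      omega
    · have hr : T.parent^[j] x = T.root := T.iterate_of_le h.le
      rw [hr, T.depth_root]
      exact ⟨Nat.zero_le _, by simpa using T.iterate_depth x⟩
  · rintro ⟨-, h⟩
    exact ⟨_, h⟩

lemma desc_self (v : V) : v ∈ T.desc v := ⟨0, rfl⟩

lemma desc_trans {x y z : V} (h1 : x ∈ T.desc y) (h2 : y ∈ T.desc z) : x ∈ T.desc z := by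
  obtain ⟨i, hi⟩ := h1
  obtain ⟨j, hj⟩ := h2
  exact ⟨j + i, by rw [Function.iterate_add_apply, hi, hj]⟩

lemma mem_desc_anc (v : V) (k : ℕ) : v ∈ T.desc (T.anc v k) := ⟨_, rfl⟩

lemma depth_anc {v : V} {k : ℕ} (h : k ≤ T.depth v) : T.depth (T.anc v k) = k := by
  rw [anc, T.depth_iterate]; omega

lemma anc_eq_of_mem {x n : V} {k : ℕ} (h : x ∈ T.desc n) (hd : T.depth n = k) :
    T.anc x k = n := by
  rw [T.mem_desc_iff] at h
  rw [anc, ← hd]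
  exact h.2

lemma anc_self (v : V) : T.anc v (T.depth v) = v := by simp [anc]

lemma not_mem_desc_of_lt {x n : V} (h : T.depth x < T.depth n) : x ∉ T.desc n :=
  fun hx => absurd (T.mem_desc_iff.mp hx).1 (by omega)

lemma exists_leaf (x : V) : ∃ w, T.IsLeaf w ∧ w ∈ T.desc x := by
  obtain ⟨w, hw, hmax⟩ := Set.Finite.exists_maximalFor T.depth (T.desc x)
      (Set.toFinite _) ⟨x, T.desc_self x⟩
  refine ⟨w, ?_, hw⟩
  ext u
  simp only [Set.mem_singleton_iff]
  constructor
  · intro hu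
    have hux : u ∈ T.desc x := T.desc_trans hu hw
    have h1 := T.mem_desc_iff.mp hu
    have h2 := hmax hux h1.1
    have h0 : T.depth u - T.depth w = 0 := by omega
    have h3 := h1.2
    rw [h0] at h3
    exact h3
  · rintro rfl
    exact T.desc_self u

end GridTree


/-- Lemma 3: `n = α_m^k` for a leaf `m` iff there is a set of leaves `W ∋ m`
whose `k`-th level sets intersect exactly in `{n}`. -/
theorem stmt6 {V : Type} [Fintype V] [DecidableEq V] (T : GridTree V)
    (m : V) (hm : T.IsLeaf m) (k : ℕ) (hk : k ≤ T.depth m) (n : V) :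
    T.anc m k = n ↔
      ∃ W : Set V, m ∈ W ∧ (∀ w ∈ W, T.IsLeaf w) ∧
        (⋂ w ∈ W, T.level w k) = {n} := by
  have hm' : T.desc m = {m} := hm
  constructor
  · rintro rfl
    have hdn : T.depth (T.anc m k) = k := T.depth_anc hk
    refine ⟨{w | T.IsLeaf w ∧ k ≤ T.depth w ∧ T.anc w k = T.anc m k},
      ⟨hm, hk, rfl⟩, fun w hw => hw.1, ?_⟩
    ext x
    simp only [Set.mem_iInter, Set.mem_singleton_iff, Set.mem_setOf_eq]
    constructor
    · intro hx
      have hxm := hx m ⟨hm, hk, rfl⟩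
      rcases eq_or_lt_of_le hk with heq | hlt
      · rw [GridTree.level, if_pos heq, hm', Set.mem_singleton_iff] at hxm
        have ha : T.anc m k = m := by rw [heq, T.anc_self]
        rw [hxm, ha]
      · rw [GridTree.level, if_neg (by omega), Set.mem_diff] at hxm
        obtain ⟨hx1, hx2⟩ := hxm
        by_contra hne
        have h1 := T.mem_desc_iff.mp hx1
        rw [hdn] at h1
        have hgt : k + 1 ≤ T.depth x := by
          rcases eq_or_lt_of_le h1.1 with he | hl
          · exfalso
            apply hne
            have h2 := h1.2
            have h0 : T.depth x - k = 0 := by omega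
            rw [h0] at h2
            exact h2.symm ▸ rfl
          · omega
        obtain ⟨w, hwl, hwx⟩ := T.exists_leaf x
        have hwc : w ∈ T.desc (T.anc x (k+1)) := T.desc_trans hwx (T.mem_desc_anc x (k+1))
        have hwn : w ∈ T.desc (T.anc m k) := T.desc_trans hwx hx1
        have hdw : k + 1 ≤ T.depth w := by
          have := (T.mem_desc_iff.mp hwx).1
          omega
        have hancw : T.anc w k = T.anc m k := T.anc_eq_of_mem hwn hdn
        have hxw := hx w ⟨hwl, by omega, hancw⟩
        rw [GridTree.level, if_neg (by omega), Set.mem_diff] at hxw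
        apply hxw.2
        have he : T.anc w (k+1) = T.anc x (k+1) := T.anc_eq_of_mem hwc (T.depth_anc hgt)
        rw [he]
        exact T.mem_desc_anc x (k+1)
    · rintro rfl w ⟨hwl, hwk, hwa⟩
      rcases eq_or_lt_of_le hwk with heq | hlt
      · have hwl' : T.desc w = {w} := hwl
        rw [GridTree.level, if_pos heq, hwl', Set.mem_singleton_iff]
        rw [← hwa, heq, T.anc_self]
      · rw [GridTree.level, if_neg (by omega), Set.mem_diff]
        refine ⟨by rw [← hwa]; exact T.desc_self _, ?_⟩
        apply T.not_mem_desc_of_lt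
        rw [hdn, T.depth_anc (by omega)]
        omega
  · rintro ⟨W, hmW, hWl, hInt⟩
    have hn : ∀ w ∈ W, n ∈ T.level w k := by
      intro w hw
      have hnI : n ∈ ⋂ w ∈ W, T.level w k := by rw [hInt]; exact rfl
      exact Set.mem_iInter₂.mp hnI w hw
    have key : ∀ w ∈ W, T.anc n k ∈ T.level w k := by
      intro w hw
      have hnw := hn w hw
      have hwl' : T.desc w = {w} := hWl w hw
      by_cases h : k = T.depth w
      · rw [GridTree.level, if_pos h, hwl', Set.mem_singleton_iff] at hnw ⊢
        subst hnw
        rw [h, T.anc_self]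
      · rw [GridTree.level, if_neg h] at hnw ⊢
        obtain ⟨h1, h2⟩ := hnw
        have hkw : k < T.depth w := by
          by_contra hle
          push_neg at hle
          have e1 : T.anc w k = w := by
            rw [GridTree.anc]
            have h0 : T.depth w - k = 0 := by omega
            rw [h0]
            rfl
          have e2 : T.anc w (k+1) = w := by
            rw [GridTree.anc]
            have h0 : T.depth w - (k+1) = 0 := by omega
            rw [h0]
            rfl
          exact h2 (by rw [e2, ← e1]; exact h1)
        have hdk : T.depth (T.anc w k) = k := T.depth_anc hkw.le
        have hanc : T.anc n k = T.anc w k := T.anc_eq_of_mem h1 hdk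
        rw [hanc]
        refine ⟨T.desc_self _, T.not_mem_desc_of_lt ?_⟩
        rw [hdk, T.depth_anc (by omega)]
        omega
    have hanc_n : T.anc n k = n := by
      have h3 : T.anc n k ∈ ⋂ w ∈ W, T.level w k := Set.mem_iInter₂.mpr key
      rw [hInt] at h3
      exact h3
    have hm2 := hn m hmW
    by_cases h : k = T.depth m
    · rw [GridTree.level, if_pos h, hm', Set.mem_singleton_iff] at hm2
      rw [h, T.anc_self]
      exact hm2.symm
    · rw [GridTree.level, if_neg h] at hm2
      obtain ⟨h1, h2⟩ := hm2
      have hkm : k < T.depth m := lt_of_le_of_ne hk h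
      have he : T.anc n k = T.anc m k := T.anc_eq_of_mem h1 (T.depth_anc hkm.le)
      rw [← he, hanc_n]
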